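/- For every real number c with 0 < c < 1, ∫_{-2√c}^{2√c} ((1+c)/(2π)) · √(4c - t²)/((1+c)² - t²) dt = c. -/

import Mathlib

open Real Set

theorem stmt_10 (c : ℝ) (h0 : 0 < c) (h1 : c < 1) :
    ∫ t in (-(2 * Real.sqrt c))..(2 * Real.sqrt c),
        (1 + c) / (2 * Real.pi) * Real.sqrt (4 * c - t ^ 2) / ((1 + c) ^ 2 - t ^ 2) =
      c := by
  have hs : 0 < Real.sqrt c := Real.sqrt_pos.2 h0
  have hsq : Real.sqrt c ^ 2 = c := Real.sq_sqrt h0.le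
  have hs1 : Real.sqrt c < 1 := by nlinarith
  set a : ℝ := 2 * Real.sqrt c with ha_def
  have ha : 0 < a := by positivity
  have ha2 : a ^ 2 = 4 * c := by rw [ha_def, mul_pow, hsq]; ring
  set b : ℝ := 1 + c with hb_def
  set d : ℝ := 1 - c with hd_def
  have hb : 0 < b := by rw [hb_def]; linarith
  have hd : 0 < d := by rw [hd_def]; linarith
  have hba : a < b := by nlinarith
  have hbad : b ^ 2 - a ^ 2 = d ^ 2 := by rw [ha2, hb_def, hd_def]; ring
  set K : ℝ := (1 + c) / (2 * Real.pi) with hK_def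
  set F : ℝ → ℝ := fun t =>
    K * (Real.arcsin (t / a) -
      d / b * Real.arcsin (d * t / (a * Real.sqrt (b ^ 2 - t ^ 2)))) with hF_def
  -- positivity of b^2 - t^2 on Icc
  have hTpos : ∀ t ∈ Icc (-a) a, 0 < b ^ 2 - t ^ 2 := by
    intro t ht
    have h1 := ht.1; have h2 := ht.2
    nlinarith
  -- derivative on the interior
  have hder : ∀ t ∈ Ioo (-a) a,
      HasDerivAt F ((1 + c) / (2 * Real.pi) * Real.sqrt (4 * c - t ^ 2) /
        ((1 + c) ^ 2 - t ^ 2)) t := by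
    intro t ht
    have ht1 := ht.1; have ht2 := ht.2
    have hSpos : 0 < 4 * c - t ^ 2 := by nlinarith
    set S : ℝ := Real.sqrt (4 * c - t ^ 2) with hS_def
    have hS : 0 < S := Real.sqrt_pos.2 hSpos
    have hS2 : S ^ 2 = 4 * c - t ^ 2 := Real.sq_sqrt hSpos.le
    have hT2pos : 0 < b ^ 2 - t ^ 2 := hTpos t ⟨ht1.le, ht2.le⟩
    set T : ℝ := Real.sqrt (b ^ 2 - t ^ 2) with hT_def
    have hT : 0 < T := Real.sqrt_pos.2 hT2pos
    have hT2 : T ^ 2 = b ^ 2 - t ^ 2 := Real.sq_sqrt hT2pos.le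
    -- arcsin (t/a)
    have hta : (t / a) ^ 2 < 1 := by
      rw [div_pow, div_lt_one (by positivity)]; nlinarith
    have htane1 : t / a ≠ -1 := by intro h; rw [h] at hta; norm_num at hta
    have htane2 : t / a ≠ 1 := by intro h; rw [h] at hta; norm_num at hta
    have harc1 : HasDerivAt (fun x => Real.arcsin (x / a))
        (1 / Real.sqrt (1 - (t / a) ^ 2) * (1 / a)) t :=
      HasDerivAt.comp t (Real.hasDerivAt_arcsin htane1 htane2) ((hasDerivAt_id t).div_const a)
    -- sqrt (b^2 - t^2)
    have hinner : HasDerivAt (fun x : ℝ => b ^ 2 - x ^ 2) (-(2 * t)) t := by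
      simpa using (hasDerivAt_pow 2 t).const_sub (b ^ 2)
    have hTder : HasDerivAt (fun x => Real.sqrt (b ^ 2 - x ^ 2))
        (1 / (2 * T) * -(2 * t)) t :=
      (Real.hasDerivAt_sqrt hT2pos.ne').comp t hinner
    -- u = d t / (a T)
    have haT : a * T ≠ 0 := by positivity
    have hnum : HasDerivAt (fun x : ℝ => d * x) d t := by
      simpa using (hasDerivAt_id t).const_mul d
    have hden : HasDerivAt (fun x => a * Real.sqrt (b ^ 2 - x ^ 2))
        (a * (1 / (2 * T) * -(2 * t))) t := hTder.const_mul a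
    have hu : HasDerivAt (fun x => d * x / (a * Real.sqrt (b ^ 2 - x ^ 2)))
        ((d * (a * T) - d * t * (a * (1 / (2 * T) * -(2 * t)))) / (a * T) ^ 2) t :=
      hnum.div hden haT
    -- u in (-1, 1)
    have hub : (d * t / (a * T)) ^ 2 < 1 := by
      rw [div_pow, div_lt_one (by positivity)]
      have h1 : (a * T) ^ 2 = a ^ 2 * T ^ 2 := by ring
      have h2 : (d * t) ^ 2 = d ^ 2 * t ^ 2 := by ring
      have key : a ^ 2 * T ^ 2 - d ^ 2 * t ^ 2 = (b * S) ^ 2 := by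
        have h3 : (b * S) ^ 2 = b ^ 2 * S ^ 2 := by ring
        rw [h3, hT2, hS2, ha2, hb_def, hd_def]; ring
      have hpos : 0 < (b * S) ^ 2 := by positivity
      rw [h1, h2]; linarith
    have hune1 : d * t / (a * T) ≠ -1 := by
      intro h; rw [h] at hub; norm_num at hub
    have hune2 : d * t / (a * T) ≠ 1 := by
      intro h; rw [h] at hub; norm_num at hub
    have harc2 : HasDerivAt (fun x => Real.arcsin (d * x / (a * Real.sqrt (b ^ 2 - x ^ 2))))
        (1 / Real.sqrt (1 - (d * t / (a * T)) ^ 2) *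
          ((d * (a * T) - d * t * (a * (1 / (2 * T) * -(2 * t)))) / (a * T) ^ 2)) t :=
      HasDerivAt.comp t (Real.hasDerivAt_arcsin hune1 hune2) hu
    have hF' : HasDerivAt F
        (K * (1 / Real.sqrt (1 - (t / a) ^ 2) * (1 / a) -
          d / b * (1 / Real.sqrt (1 - (d * t / (a * T)) ^ 2) *
            ((d * (a * T) - d * t * (a * (1 / (2 * T) * -(2 * t)))) / (a * T) ^ 2)))) t := by
      exact ((harc1.sub (harc2.const_mul (d / b))).const_mul K)
    convert hF' using 1
    -- simplify the two square roots
    have e1 : Real.sqrt (1 - (t / a) ^ 2) = S / a := by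
      rw [show 1 - (t / a) ^ 2 = (S / a) ^ 2 by
        rw [div_pow, div_pow, hS2, ha2]; field_simp]
      exact Real.sqrt_sq (by positivity)
    have key2 : a ^ 2 * (b ^ 2 - t ^ 2) - d ^ 2 * t ^ 2 = (b * S) ^ 2 := by
      have h3 : (b * S) ^ 2 = b ^ 2 * S ^ 2 := by ring
      rw [h3, hS2, ha2, hb_def, hd_def]; ring
    have e2 : Real.sqrt (1 - (d * t / (a * T)) ^ 2) = b * S / (a * T) := by
      rw [show 1 - (d * t / (a * T)) ^ 2 = (b * S / (a * T)) ^ 2 by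
        field_simp
        linear_combination key2 + a ^ 2 * hT2]
      exact Real.sqrt_sq (by positivity)
    rw [e1, e2]
    have hT2' : (1 + c) ^ 2 - t ^ 2 = T ^ 2 := by rw [hT2, hb_def]
    have hSd : T ^ 2 = S ^ 2 + d ^ 2 := by rw [hT2, hS2, hb_def, hd_def]; ring
    have hb2 : T ^ 2 + t ^ 2 = b ^ 2 := by rw [hT2]; ring
    rw [hT2', mul_div_assoc]
    congr 1
    have hT2c : T ^ 2 = (1 + c) ^ 2 - t ^ 2 := by rw [hT2, hb_def]
    field_simp
    linear_combination (-b ^ 2) * hSd + d ^ 2 * hb2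
  have hle : -a ≤ a := by linarith
  have hcont : ContinuousOn F (Icc (-a) a) := by
    apply ContinuousOn.mul continuousOn_const
    apply ContinuousOn.sub
    · exact Real.continuous_arcsin.comp_continuousOn (continuous_id.div_const a).continuousOn
    · apply ContinuousOn.mul continuousOn_const
      apply Real.continuous_arcsin.comp_continuousOn
      apply ContinuousOn.div
      · exact (continuous_const.mul continuous_id).continuousOn
      · exact (continuous_const.mul
          ((continuous_const.sub (continuous_pow 2)).sqrt)).continuousOn
      · intro t ht
        have h1 := hTpos t ht
        have h2 : 0 < Real.sqrt (b ^ 2 - t ^ 2) := Real.sqrt_pos.2 h1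
        positivity
  have hint : IntervalIntegrable
      (fun t => (1 + c) / (2 * Real.pi) * Real.sqrt (4 * c - t ^ 2) / ((1 + c) ^ 2 - t ^ 2))
      MeasureTheory.volume (-a) a := by
    apply ContinuousOn.intervalIntegrable
    rw [uIcc_of_le hle]
    apply ContinuousOn.div
    · exact (continuous_const.mul
        ((continuous_const.sub (continuous_pow 2)).sqrt)).continuousOn
    · exact (continuous_const.sub (continuous_pow 2)).continuousOn
    · intro t ht
      have h1 := hTpos t ht
      rw [hb_def] at h1
      exact ne_of_gt h1
  have hFTC : ∫ t in (-a)..a,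
      (1 + c) / (2 * Real.pi) * Real.sqrt (4 * c - t ^ 2) / ((1 + c) ^ 2 - t ^ 2) =
      F a - F (-a) :=
    intervalIntegral.integral_eq_sub_of_hasDeriv_right_of_le hle hcont
      (fun t ht => (hder t ht).hasDerivWithinAt) hint
  have hsqd : Real.sqrt (b ^ 2 - a ^ 2) = d := by rw [hbad, Real.sqrt_sq hd.le]
  have hFa : F a = K * (Real.pi / 2 - d / b * (Real.pi / 2)) := by
    simp only [hF_def]
    rw [div_self ha.ne', Real.arcsin_one, hsqd,
      show d * a / (a * d) = 1 by field_simp, Real.arcsin_one]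
  have hFna : F (-a) = K * (-(Real.pi / 2) - d / b * (-(Real.pi / 2))) := by
    simp only [hF_def]
    rw [neg_sq, hsqd, show -a / a = (-1 : ℝ) by rw [neg_div, div_self ha.ne'],
      show d * -a / (a * d) = (-1 : ℝ) by field_simp, Real.arcsin_neg_one]
  rw [hFTC, hFa, hFna, hK_def, hb_def, hd_def]
  field_simp
  ring
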